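/- Let d ≥ 1 and let v, u^(1), …, u^(d) be d×d complex unitary matrices. Define the matrix U indexed by (Fin d × Fin d) × (Fin d × Fin d) with entries U_{(a,b),(i,j)} = v_{aj} · (u^(a))_{bi}, and define its space-time dual Ũ by Ũ_{(i,j),(k,l)} = U_{(j,l),(i,k)}. Then both U and Ũ are unitary matrices. -/
import Mathlib


open Matrix

lemma row_orth {d : ℕ} (w : Matrix (Fin d) (Fin d) ℂ)
    (hw : w ∈ Matrix.unitaryGroup (Fin d) ℂ) (a a' : Fin d) :
    ∑ j, w a j * star (w a' j) = if a = a' then 1 else 0 := by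
  have h : w * star w = 1 := (Matrix.mem_unitaryGroup_iff).mp hw
  have := congrFun (congrFun h a) a'
  simpa [Matrix.mul_apply, Matrix.one_apply, Matrix.star_apply] using this

lemma col_orth {d : ℕ} (w : Matrix (Fin d) (Fin d) ℂ)
    (hw : w ∈ Matrix.unitaryGroup (Fin d) ℂ) (i i' : Fin d) :
    ∑ l, w l i * star (w l i') = if i = i' then 1 else 0 := by
  have h : star w * w = 1 := (Matrix.mem_unitaryGroup_iff').mp hw
  have h2 := congrFun (congrFun h i') i
  simp only [Matrix.mul_apply, Matrix.one_apply, Matrix.star_apply] at h2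
  calc ∑ l, w l i * star (w l i') = ∑ l, star (w l i') * w l i := by
        exact Finset.sum_congr rfl fun l _ => mul_comm _ _
    _ = if i = i' then 1 else 0 := by rw [h2]; simp [eq_comm]

theorem family_S_left_is_dual_unitary
    (d : ℕ) (hd : 1 ≤ d)
    (v : Matrix (Fin d) (Fin d) ℂ) (hv : v ∈ Matrix.unitaryGroup (Fin d) ℂ)
    (u : Fin d → Matrix (Fin d) (Fin d) ℂ) (hu : ∀ a, u a ∈ Matrix.unitaryGroup (Fin d) ℂ)
    (U Udual : Matrix (Fin d × Fin d) (Fin d × Fin d) ℂ)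
    (hU : ∀ a b i j, U (a, b) (i, j) = v a j * (u a) b i)
    (hUdual : ∀ i j k l, Udual (i, j) (k, l) = U (j, l) (i, k)) :
    U ∈ Matrix.unitaryGroup (Fin d × Fin d) ℂ ∧
    Udual ∈ Matrix.unitaryGroup (Fin d × Fin d) ℂ := by
  constructor
  · rw [Matrix.mem_unitaryGroup_iff]
    ext ⟨a, b⟩ ⟨a', b'⟩
    have key : (U * star U) (a, b) (a', b')
        = (∑ i, (u a) b i * star ((u a') b' i)) * (∑ j, v a j * star (v a' j)) := by
      rw [Matrix.mul_apply, Finset.sum_mul_sum, Fintype.sum_prod_type]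
      refine Finset.sum_congr rfl fun i _ => Finset.sum_congr rfl fun j _ => ?_
      simp only [Matrix.star_apply, hU, star_mul']
      ring
    rw [key, row_orth v hv]
    by_cases hab : a = a'
    · subst hab
      rw [row_orth (u a) (hu a)]
      simp [Matrix.one_apply, Prod.ext_iff]
    · simp [Matrix.one_apply, Prod.ext_iff, hab]
  · rw [Matrix.mem_unitaryGroup_iff]
    ext ⟨i, j⟩ ⟨i', j'⟩
    have key : (Udual * star Udual) (i, j) (i', j')
        = (∑ k, v j k * star (v j' k)) * (∑ l, (u j) l i * star ((u j') l i')) := by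
      rw [Matrix.mul_apply, Finset.sum_mul_sum, Fintype.sum_prod_type]
      refine Finset.sum_congr rfl fun k _ => Finset.sum_congr rfl fun l _ => ?_
      simp only [Matrix.star_apply, hUdual, hU, star_mul']
      ring
    rw [key, row_orth v hv]
    by_cases hjj : j = j'
    · subst hjj
      rw [col_orth (u j) (hu j)]
      simp [Matrix.one_apply, Prod.ext_iff, and_comm]
    · simp [Matrix.one_apply, Prod.ext_iff, hjj]
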